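/- Let G be a locally finite connected graph, X a finite set of vertices, and Π a minimal edge cutset separating X from infinity (i.e., Π is minimal among edge sets whose removal leaves no infinite path from X). Then every connected component of G \ X obtained after deleting Π that does not contain X is infinite; equivalently, for any vertex v in the external boundary of the component of X, there is an infinite path starting at v meeting that component only in v. -/

import Mathlib

/-- `f` is an infinite (injective) ray in `G`. -/
def IsRay {V : Type*} (G : SimpleGraph V) (f : ℕ → V) : Prop :=
  Function.Injective f ∧ ∀ n, G.Adj (f n) (f (n + 1))

/-- The edge set `P` separates the vertex set `X` from infinity:
every infinite ray starting in `X` uses an edge of `P`. -/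
def SepInf {V : Type*} (G : SimpleGraph V) (X : Set V) (P : Set (Sym2 V)) : Prop :=
  ∀ f : ℕ → V, IsRay G f → f 0 ∈ X → ∃ n, s(f n, f (n + 1)) ∈ P

private lemma reach_prefix {V : Type*} (G : SimpleGraph V) (P : Set (Sym2 V)) (f : ℕ → V)
    (hadj : ∀ m, G.Adj (f m) (f (m + 1))) :
    ∀ n, (∀ m < n, s(f m, f (m + 1)) ∉ P) → (G.deleteEdges P).Reachable (f 0) (f n) := by
  intro n
  induction n with
  | zero => intro _; exact .refl _
  | succ n ih =>
    intro h
    refine (ih fun m hm => h m (hm.trans (Nat.lt_succ_self n))).trans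
      (SimpleGraph.Adj.reachable ?_)
    rw [SimpleGraph.deleteEdges_adj]
    exact ⟨hadj n, h n (Nat.lt_succ_self n)⟩

private lemma exists_first {V : Type*} {G : SimpleGraph V} (P : Set (Sym2 V)) :
    ∀ {v x : V}, G.Walk v x →
      (G.deleteEdges P).Reachable v x ∨
        ∃ a b, s(a, b) ∈ P ∧ (G.deleteEdges P).Reachable v a := by
  intro v x w
  induction w with
  | nil => exact .inl (.refl _)
  | @cons u c d h p ih =>
    by_cases hP : s(u, c) ∈ P
    · exact .inr ⟨u, c, hP, .refl _⟩
    · have hadj : (G.deleteEdges P).Adj u c := by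
        rw [SimpleGraph.deleteEdges_adj]; exact ⟨h, hP⟩
      rcases ih with hr | ⟨a, b, hab, hra⟩
      · exact .inl (hadj.reachable.trans hr)
      · exact .inr ⟨a, b, hab, hadj.reachable.trans hra⟩

/-- if `P` is a minimal edge cutset separating the finite vertex set `X`
from infinity, then every connected component of `G` minus `P` that contains no vertex
of `X` is infinite. -/
theorem stmt1 {V : Type*} (G : SimpleGraph V) [∀ v, Fintype (G.neighborSet v)]
    (hconn : G.Connected) (hinf : Infinite V)
    (X : Set V) (hX : X.Finite) (hXne : X.Nonempty)
    (P : Set (Sym2 V)) (hPe : P ⊆ G.edgeSet)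
    (hsep : SepInf G X P) (hmin : ∀ Q ⊂ P, ¬ SepInf G X Q) :
    ∀ v : V, (∀ x ∈ X, ¬ (G.deleteEdges P).Reachable v x) →
      {w | (G.deleteEdges P).Reachable v w}.Infinite := by
  classical
  intro v hv
  obtain ⟨x, hx⟩ := hXne
  obtain ⟨w⟩ := hconn v x
  rcases exists_first P w with hr | ⟨a, b, hPab, hva⟩
  · exact absurd hr (hv x hx)
  -- remove the edge s(a,b) from P
  have hQ : P \ {s(a, b)} ⊂ P := Set.sdiff_singleton_ssubset.2 hPab
  have hnotsep := hmin _ hQ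
  simp only [SepInf, not_forall] at hnotsep
  obtain ⟨f, hf, hf0, hfQ⟩ := hnotsep
  push_neg at hfQ
  -- every P-edge of f equals s(a,b)
  have hfP : ∀ n, s(f n, f (n + 1)) ∈ P → s(f n, f (n + 1)) = s(a, b) := by
    intro n hn
    by_contra hne
    exact hfQ n ⟨hn, hne⟩
  have hex : ∃ n, s(f n, f (n + 1)) ∈ P := hsep f hf hf0
  set n := Nat.find hex with hndef
  have hn : s(f n, f (n + 1)) ∈ P := Nat.find_spec hex
  have hnab : s(f n, f (n + 1)) = s(a, b) := hfP n hn
  have hXn : (G.deleteEdges P).Reachable (f 0) (f n) :=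
    reach_prefix G P f hf.2 n fun m hm => Nat.find_min hex hm
  rcases Sym2.eq_iff.1 hnab with ⟨h1, h2⟩ | ⟨h1, h2⟩
  · -- f n = a : then v is reachable from X, contradiction
    exact absurd (hva.trans (h1 ▸ hXn).symm) (hv (f 0) hf0)
  · -- f n = b, f (n+1) = a : the tail of f is an infinite ray in v's component
    set g : ℕ → V := fun k => f (n + 1 + k) with hgdef
    have hg0 : g 0 = a := h2
    have hgP : ∀ k, s(g k, g (k + 1)) ∉ P := by
      intro k hk
      have := hfP (n + 1 + k) hk
      rcases Sym2.eq_iff.1 this with ⟨e1, e2⟩ | ⟨e1, e2⟩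
      · -- f (n+1+k) = a = f (n+1)
        have : n + 1 + k = n + 1 := hf.1 (e1.trans h2.symm)
        have hk0 : k = 0 := by omega
        have : n + 1 + k + 1 = n := hf.1 (e2.trans h1.symm)
        omega
      · have : n + 1 + k = n := hf.1 (e1.trans h1.symm)
        omega
    have hgadj : ∀ k, G.Adj (g k) (g (k + 1)) := fun k => hf.2 (n + 1 + k)
    have hgreach : ∀ k, (G.deleteEdges P).Reachable v (g k) := by
      intro k
      have : (G.deleteEdges P).Reachable (g 0) (g k) :=
        reach_prefix G P g hgadj k fun m _ => hgP m
      exact hva.trans (hg0 ▸ this)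
    have hginj : Function.Injective g :=
      hf.1.comp fun k l h => by omega
    exact Set.infinite_of_injective_forall_mem hginj fun k => hgreach k
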